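/- For all m, n ≥ 0, the sum of sgn(σ) over all (m,n)-shuffles σ ∈ S_{m+n} equals 0 if both m and n are odd, and equals the binomial coefficient (⌊(m+n)/2⌋ choose ⌊m/2⌋) otherwise. -/
import Mathlib

open Finset

namespace ShuffleAux

variable {m n : ℕ}

/-- The shuffle predicate. -/
def P (m n : ℕ) (σ : Equiv.Perm (Fin (m + n))) : Prop :=
  (∀ i j : Fin (m + n), (i : ℕ) < m → (j : ℕ) < m → i < j → σ i < σ j) ∧
  (∀ i j : Fin (m + n), m ≤ (i : ℕ) → m ≤ (j : ℕ) → i < j → σ i < σ j)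

/-- The first `m` positions. -/
def firstBlock (m n : ℕ) : Finset (Fin (m + n)) :=
  Finset.univ.filter fun i => (i : ℕ) < m

lemma mem_firstBlock {i : Fin (m + n)} : i ∈ firstBlock m n ↔ (i : ℕ) < m := by
  simp [firstBlock]

lemma firstBlock_eq : firstBlock m n =
    Finset.map (Fin.castAddEmb n) Finset.univ := by
  ext x
  simp only [mem_firstBlock, Finset.mem_map, Finset.mem_univ, true_and]
  constructor
  · intro hx; exact ⟨⟨x, hx⟩, rfl⟩
  · rintro ⟨y, rfl⟩; exact y.2

lemma firstBlock_card : (firstBlock m n).card = m := by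
  rw [firstBlock_eq, Finset.card_map, Finset.card_univ, Fintype.card_fin]

/-- image of the first block under a permutation -/
def img (σ : Equiv.Perm (Fin (m + n))) : Finset (Fin (m + n)) :=
  (firstBlock m n).image σ

lemma img_card (σ : Equiv.Perm (Fin (m + n))) : (img σ).card = m := by
  rw [img, Finset.card_image_of_injective _ σ.injective, firstBlock_card]

lemma compl_card (A : Finset (Fin (m + n))) (hA : A.card = m) : Aᶜ.card = n := by
  simp [Finset.card_compl, hA]

/-- the canonical shuffle with first-block image `A`. -/
def shuf (A : Finset (Fin (m + n))) (hA : A.card = m) : Equiv.Perm (Fin (m + n)) :=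
  finSumFinEquiv.symm.trans <|
    (Equiv.sumCongr (A.orderIsoOfFin hA).toEquiv
      ((Aᶜ.orderIsoOfFin (compl_card A hA)).toEquiv.trans
        (Equiv.subtypeEquivRight fun x => Finset.mem_compl))).trans
    (Equiv.sumCompl fun x => x ∈ A)

lemma shuf_apply_lt (A : Finset (Fin (m + n))) (hA : A.card = m) (i : Fin (m + n))
    (hi : (i : ℕ) < m) : shuf A hA i = A.orderEmbOfFin hA ⟨i, hi⟩ := by
  have hsymm : finSumFinEquiv.symm i = Sum.inl (⟨i, hi⟩ : Fin m) :=
    finSumFinEquiv_symm_apply_castAdd ⟨i, hi⟩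
  simp [shuf, hsymm]

lemma shuf_apply_ge (A : Finset (Fin (m + n))) (hA : A.card = m) (j : Fin (m + n))
    (hj : m ≤ (j : ℕ)) :
    shuf A hA j = Aᶜ.orderEmbOfFin (compl_card A hA) ⟨(j : ℕ) - m, by have := j.2; omega⟩ := by
  have h1 : j = Fin.natAdd m ⟨(j : ℕ) - m, by have := j.2; omega⟩ := by ext; simp; omega
  have hsymm : finSumFinEquiv.symm j = Sum.inr (⟨(j : ℕ) - m, by have := j.2; omega⟩ : Fin n) := by
    conv_lhs => rw [h1]
    exact finSumFinEquiv_symm_apply_natAdd _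
  simp [shuf, hsymm]

lemma shuf_isShuffle (A : Finset (Fin (m + n))) (hA : A.card = m) : P m n (shuf A hA) := by
  constructor
  · intro i j hi hj hij
    rw [shuf_apply_lt A hA i hi, shuf_apply_lt A hA j hj]
    exact (A.orderEmbOfFin hA).strictMono (by simpa [Fin.mk_lt_mk] using hij)
  · intro i j hi hj hij
    rw [shuf_apply_ge A hA i hi, shuf_apply_ge A hA j hj]
    refine (Aᶜ.orderEmbOfFin _).strictMono ?_
    simp only [Fin.mk_lt_mk]
    have := j.2
    have h2 : (i : ℕ) < (j : ℕ) := hij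
    omega

lemma img_shuf (A : Finset (Fin (m + n))) (hA : A.card = m) : img (shuf A hA) = A := by
  apply Finset.eq_of_subset_of_card_le
  · intro x hx
    rw [img, Finset.mem_image] at hx
    obtain ⟨i, hi, rfl⟩ := hx
    rw [mem_firstBlock] at hi
    rw [shuf_apply_lt A hA i hi]
    exact Finset.orderEmbOfFin_mem _ _ _
  · rw [img_card, hA]

lemma apply_lt_eq (σ : Equiv.Perm (Fin (m + n))) (hσ : P m n σ) (i : Fin (m + n))
    (hi : (i : ℕ) < m) : σ i = (img σ).orderEmbOfFin (img_card σ) ⟨i, hi⟩ := by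
  have hf : (fun k : Fin m => σ (Fin.castAdd n k)) = ⇑((img σ).orderEmbOfFin (img_card σ)) := by
    apply Finset.orderEmbOfFin_unique
    · intro x
      exact Finset.mem_image_of_mem _ (mem_firstBlock.2 x.2)
    · intro x y hxy
      exact hσ.1 _ _ x.2 y.2 hxy
  have := congrFun hf ⟨i, hi⟩
  simpa using this

lemma apply_ge_mem_compl (σ : Equiv.Perm (Fin (m + n))) (i : Fin (m + n))
    (hi : m ≤ (i : ℕ)) : σ i ∈ (img σ)ᶜ := by
  rw [Finset.mem_compl, img, Finset.mem_image]
  rintro ⟨j, hj, hji⟩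
  rw [mem_firstBlock] at hj
  have := σ.injective hji
  omega

lemma apply_ge_eq (σ : Equiv.Perm (Fin (m + n))) (hσ : P m n σ) (i : Fin (m + n))
    (hi : m ≤ (i : ℕ)) :
    σ i = (img σ)ᶜ.orderEmbOfFin (compl_card _ (img_card σ)) ⟨(i : ℕ) - m, by have := i.2; omega⟩ := by
  have hf : (fun k : Fin n => σ (Fin.natAdd m k)) =
      ⇑((img σ)ᶜ.orderEmbOfFin (compl_card _ (img_card σ))) := by
    apply Finset.orderEmbOfFin_unique
    · intro x
      exact apply_ge_mem_compl σ _ (Nat.le_add_right m x)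
    · intro x y hxy
      exact hσ.2 _ _ (Nat.le_add_right m x) (Nat.le_add_right m y)
        (Nat.add_lt_add_left hxy m)
  have h1 : i = Fin.natAdd m ⟨(i : ℕ) - m, by have := i.2; omega⟩ := by
    ext; simp; omega
  have h2 := congrFun hf ⟨(i : ℕ) - m, by have := i.2; omega⟩
  conv_lhs => rw [h1]
  exact h2

lemma shuffle_eq_of_img_eq (σ τ : Equiv.Perm (Fin (m + n))) (hσ : P m n σ) (hτ : P m n τ)
    (h : img σ = img τ) : σ = τ := by
  ext k
  rcases lt_or_ge (k : ℕ) m with hk | hk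
  · rw [apply_lt_eq σ hσ k hk, apply_lt_eq τ hτ k hk]
    simp_rw [h]
  · rw [apply_ge_eq σ hσ k hk, apply_ge_eq τ hτ k hk]
    simp_rw [h]

lemma eq_shuf (σ : Equiv.Perm (Fin (m + n))) (hσ : P m n σ) :
    σ = shuf (img σ) (img_card σ) :=
  shuffle_eq_of_img_eq _ _ hσ (shuf_isShuffle _ _) (img_shuf _ _).symm

lemma one_isShuffle : P m n (1 : Equiv.Perm (Fin (m + n))) :=
  ⟨fun _ _ _ _ h => h, fun _ _ _ _ h => h⟩

lemma img_one : img (1 : Equiv.Perm (Fin (m + n))) = firstBlock m n := by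
  simp [img]

lemma sum_firstBlock : (∑ a ∈ firstBlock m n, (a : ℕ)) = ∑ i ∈ Finset.range m, i := by
  rw [firstBlock_eq, Finset.sum_map]
  simp [Fin.castAddEmb]
  rw [← Fin.sum_univ_eq_sum_range (fun i => i) m]

lemma exists_step (A : Finset (Fin (m + n))) (hA : A.card = m) (hne : A ≠ firstBlock m n) :
    ∃ a b : Fin (m + n), a ∈ A ∧ b ∉ A ∧ (b : ℕ) + 1 = (a : ℕ) := by
  by_contra hcon
  apply hne
  have hdc : ∀ d : ℕ, ∀ a, a ∈ A → ∀ k, ∀ hk : k + d = (a : ℕ),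
      (⟨k, by have := a.2; omega⟩ : Fin (m + n)) ∈ A := by
    intro d
    induction d with
    | zero =>
      intro a ha k hk
      have he : (⟨k, by have := a.2; omega⟩ : Fin (m + n)) = a := by ext; simpa using hk
      rwa [he]
    | succ d ih =>
      intro a ha k hk
      have hb : (⟨(a : ℕ) - 1, by have := a.2; omega⟩ : Fin (m + n)) ∈ A := by
        by_contra hb
        exact hcon ⟨a, ⟨(a : ℕ) - 1, by have := a.2; omega⟩, ha, hb, by simp; omega⟩
      exact ih _ hb k (by simp; omega)
  have hdc' : ∀ a, a ∈ A → ∀ y : Fin (m + n), y ≤ a → y ∈ A := by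
    intro a ha y hy
    have := hdc ((a : ℕ) - (y : ℕ)) a ha (y : ℕ) (by have : (y:ℕ) ≤ (a:ℕ) := hy; omega)
    simpa using this
  ext x
  rw [mem_firstBlock]
  constructor
  · intro hx
    have sub : Finset.Iic x ⊆ A := fun y hy => hdc' x hx y (Finset.mem_Iic.1 hy)
    have := Finset.card_le_card sub
    rw [Fin.card_Iic, hA] at this
    omega
  · intro hx
    by_contra hxA
    have sub2 : A ⊆ Finset.Iio x := by
      intro y hy
      rw [Finset.mem_Iio]
      by_contra hlt
      exact hxA (hdc' y hy x (le_of_not_gt hlt))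
    have := Finset.card_le_card sub2
    rw [Fin.card_Iio, hA] at this
    omega

lemma sign_shuffle : ∀ s : ℕ, ∀ σ : Equiv.Perm (Fin (m + n)), P m n σ →
    (∑ a ∈ img σ, (a : ℕ)) = s →
    (Equiv.Perm.sign σ : ℤ) = (-1) ^ (s + ∑ i ∈ Finset.range m, i) := by
  intro s
  induction s using Nat.strong_induction_on with
  | _ s ih =>
    intro σ hσ hs
    by_cases hA : img σ = firstBlock m n
    · have h1 : σ = 1 := shuffle_eq_of_img_eq σ 1 hσ one_isShuffle (by rw [hA, img_one])
      have hsT : s = ∑ i ∈ Finset.range m, i := by rw [← hs, hA, sum_firstBlock]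
      rw [h1, hsT, map_one]
      rw [← two_mul, pow_mul]
      norm_num
    · obtain ⟨a, b, ha, hb, hba⟩ := exists_step (img σ) (img_card σ) hA
      have hba' : b ≠ a := fun h => by rw [h] at hba; omega
      set A := img σ with hAdef
      -- behavior of the swap on A and its complement
      have swapA : ∀ x, x ∈ A → Equiv.swap b a x = if x = a then b else x := by
        intro x hx
        rw [Equiv.swap_apply_def]
        have : x ≠ b := fun h => hb (h ▸ hx)
        simp [this]
      have swapC : ∀ x, x ∉ A → Equiv.swap b a x = if x = b then a else x := by
        intro x hx
        rw [Equiv.swap_apply_def]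
        have : x ≠ a := fun h => hx (h ▸ ha)
        simp [this]
      have mono1 : ∀ x y : Fin (m + n), x ∈ A → y ∈ A → x < y →
          Equiv.swap b a x < Equiv.swap b a y := by
        intro x y hx hy hxy
        have hxb : x ≠ b := fun h => hb (h ▸ hx)
        have hyb : y ≠ b := fun h => hb (h ▸ hy)
        rw [Fin.lt_def] at hxy ⊢
        by_cases hxa : x = a
        · subst hxa
          rw [Equiv.swap_apply_right]
          have hya : y ≠ x := fun h => by subst h; omega
          rw [Equiv.swap_apply_of_ne_of_ne hyb hya]
          omega
        · by_cases hya : y = a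
          · subst hya
            rw [Equiv.swap_apply_of_ne_of_ne hxb hxa, Equiv.swap_apply_right]
            have hxbv : (x : ℕ) ≠ (b : ℕ) := fun h => hxb (Fin.ext h)
            omega
          · rw [Equiv.swap_apply_of_ne_of_ne hxb hxa, Equiv.swap_apply_of_ne_of_ne hyb hya]
            exact hxy
      have mono2 : ∀ x y : Fin (m + n), x ∉ A → y ∉ A → x < y →
          Equiv.swap b a x < Equiv.swap b a y := by
        intro x y hx hy hxy
        have hxa : x ≠ a := fun h => hx (h ▸ ha)
        have hya : y ≠ a := fun h => hy (h ▸ ha)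
        rw [Fin.lt_def] at hxy ⊢
        by_cases hxb : x = b
        · subst hxb
          rw [Equiv.swap_apply_left]
          have hyb : y ≠ x := fun h => by subst h; omega
          rw [Equiv.swap_apply_of_ne_of_ne hyb hya]
          have hyav : (y : ℕ) ≠ (a : ℕ) := fun h => hya (Fin.ext h)
          omega
        · by_cases hyb : y = b
          · subst hyb
            rw [Equiv.swap_apply_of_ne_of_ne hxb hxa, Equiv.swap_apply_left]
            omega
          · rw [Equiv.swap_apply_of_ne_of_ne hxb hxa, Equiv.swap_apply_of_ne_of_ne hyb hya]
            exact hxy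
      set τ : Equiv.Perm (Fin (m + n)) := Equiv.swap b a * σ with hτdef
      have hPτ : P m n τ := by
        constructor
        · intro i j hi hj hij
          exact mono1 _ _ (Finset.mem_image_of_mem _ (mem_firstBlock.2 hi))
            (Finset.mem_image_of_mem _ (mem_firstBlock.2 hj)) (hσ.1 i j hi hj hij)
        · intro i j hi hj hij
          exact mono2 _ _ (Finset.mem_compl.1 (apply_ge_mem_compl σ i hi))
            (Finset.mem_compl.1 (apply_ge_mem_compl σ j hj)) (hσ.2 i j hi hj hij)
      have hm1 : 0 < m := by
        have := img_card σ
        rw [← hAdef] at this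
        have : A.Nonempty := ⟨a, ha⟩
        have hc := Finset.card_pos.2 this
        rw [← hAdef] at *
        omega
      have himgτ : img τ = insert b (A.erase a) := by
        have h1 : img τ = A.image (Equiv.swap b a) := by
          rw [img, hτdef]
          rw [show ⇑(Equiv.swap b a * σ) = ⇑(Equiv.swap b a) ∘ ⇑σ from rfl]
          rw [← Finset.image_image]
          rfl
        rw [h1]
        apply Finset.eq_of_subset_of_card_le
        · intro x hx
          rw [Finset.mem_image] at hx
          obtain ⟨y, hy, rfl⟩ := hx
          rw [swapA y hy]
          by_cases hya : y = a
          · rw [if_pos hya]; exact Finset.mem_insert_self _ _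
          · rw [if_neg hya]; exact Finset.mem_insert_of_mem (Finset.mem_erase.2 ⟨hya, hy⟩)
        · rw [Finset.card_image_of_injective _ (Equiv.swap b a).injective]
          calc (insert b (A.erase a)).card ≤ (A.erase a).card + 1 :=
                Finset.card_insert_le _ _
            _ ≤ A.card := by
                rw [Finset.card_erase_of_mem ha]
                have := Finset.card_pos.2 ⟨a, ha⟩
                omega
      have hsumτ : (∑ x ∈ img τ, (x : ℕ)) + 1 = s := by
        rw [himgτ]
        have hbe : b ∉ A.erase a := fun h => hb (Finset.mem_of_mem_erase h)
        rw [Finset.sum_insert hbe]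
        have h2 : (∑ x ∈ A.erase a, (x : ℕ)) + (a : ℕ) = ∑ x ∈ A, (x : ℕ) := by
          simpa using Finset.sum_erase_add A (fun x : Fin (m + n) => (x : ℕ)) ha
        omega
      have hστ : σ = Equiv.swap b a * τ := by
        rw [hτdef, ← mul_assoc, Equiv.swap_mul_self, one_mul]
      have ihτ := ih (∑ x ∈ img τ, (x : ℕ)) (by omega) τ hPτ rfl
      rw [hστ, map_mul, Equiv.Perm.sign_swap hba']
      push_cast
      rw [ihτ]
      have he : s + ∑ i ∈ Finset.range m, i =
          ((∑ x ∈ img τ, (x : ℕ)) + ∑ i ∈ Finset.range m, i) + 1 := by omega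
      rw [he, pow_succ]
      ring

/-! ### The subset-sum computation -/

/-- value of the `q`-binomial coefficient at `q = -1`. -/
def B (N k : ℕ) : ℤ := if N % 2 = 0 ∧ k % 2 = 1 then 0 else ((N / 2).choose (k / 2) : ℤ)

lemma B_rec (N k : ℕ) : B (N + 1) (k + 1) = B N (k + 1) + (-1) ^ (N + k) * B N k := by
  unfold B
  rcases Nat.mod_two_eq_zero_or_one N with hN | hN <;>
    rcases Nat.mod_two_eq_zero_or_one k with hk | hk
  · -- N even, k even
    rw [if_neg (by omega), if_pos (by omega), if_neg (by omega)]
    have e1 : (N + 1) / 2 = N / 2 := by omega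
    have e2 : (k + 1) / 2 = k / 2 := by omega
    have he : Even (N + k) := by rw [Nat.even_iff]; omega
    rw [e1, e2, he.neg_one_pow]
    ring
  · -- N even, k odd
    rw [if_neg (by omega), if_neg (by omega), if_pos (by omega)]
    have e1 : (N + 1) / 2 = N / 2 := by omega
    rw [e1]; ring
  · -- N odd, k even
    rw [if_pos (by omega), if_neg (by omega), if_neg (by omega)]
    have e2 : (k + 1) / 2 = k / 2 := by omega
    have ho : Odd (N + k) := by rw [Nat.odd_iff]; omega
    rw [e2, ho.neg_one_pow]
    ring
  · -- N odd, k odd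
    rw [if_neg (by omega), if_neg (by omega), if_neg (by omega)]
    have e1 : (N + 1) / 2 = N / 2 + 1 := by omega
    have e2 : (k + 1) / 2 = k / 2 + 1 := by omega
    have he : Even (N + k) := by rw [Nat.even_iff]; omega
    rw [e1, e2, he.neg_one_pow, Nat.choose_succ_succ]
    push_cast
    ring

lemma B_zero_succ (k : ℕ) : B 0 (k + 1) = 0 := by
  unfold B
  split_ifs with h
  · rfl
  · have h2 : (k + 1) % 2 = 0 := by omega
    have : 0 < (k + 1) / 2 := by omega
    rw [Nat.choose_eq_zero_of_lt (by simpa using this)]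
    norm_num

lemma SS (N : ℕ) : ∀ k : ℕ,
    (∑ A ∈ (Finset.range N).powersetCard k, (-1 : ℤ) ^ (∑ a ∈ A, a)) =
      (-1) ^ (∑ i ∈ Finset.range k, i) * B N k := by
  induction N with
  | zero =>
    intro k
    cases k with
    | zero => simp [B]
    | succ k =>
      rw [Finset.range_zero, Finset.powersetCard_eq_empty.2 (by simp)]
      rw [Finset.sum_empty, B_zero_succ]
      ring
  | succ N ih =>
    intro k
    cases k with
    | zero =>
      simp only [Finset.powersetCard_zero, Finset.sum_singleton, Finset.sum_empty, pow_zero,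
        Finset.range_zero, B]
      rw [if_neg (by omega)]
      simp
    | succ k =>
      have hNmem : N ∉ Finset.range N := by simp
      rw [Finset.range_add_one, Finset.powersetCard_succ_insert hNmem]
      have hdisj : Disjoint ((Finset.range N).powersetCard (k + 1))
          (((Finset.range N).powersetCard k).image (insert N)) := by
        rw [Finset.disjoint_left]
        intro A hA hA2
        rw [Finset.mem_powersetCard] at hA
        obtain ⟨A', hA', rfl⟩ := Finset.mem_image.1 hA2
        exact hNmem (hA.1 (Finset.mem_insert_self _ _))
      rw [Finset.sum_union hdisj]
      have hinj : ∀ A ∈ (Finset.range N).powersetCard k,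
          ∀ A' ∈ (Finset.range N).powersetCard k, insert N A = insert N A' → A = A' := by
        intro A hA A' hA' h
        have h1 : N ∉ A := fun hc => hNmem ((Finset.mem_powersetCard.1 hA).1 hc)
        have h2 : N ∉ A' := fun hc => hNmem ((Finset.mem_powersetCard.1 hA').1 hc)
        rw [← Finset.erase_insert h1, h, Finset.erase_insert h2]
      rw [Finset.sum_image hinj]
      have hterm : ∀ A ∈ (Finset.range N).powersetCard k,
          (-1 : ℤ) ^ (∑ a ∈ insert N A, a) = (-1) ^ N * (-1) ^ (∑ a ∈ A, a) := by
        intro A hA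
        have h1 : N ∉ A := fun hc => hNmem ((Finset.mem_powersetCard.1 hA).1 hc)
        rw [Finset.sum_insert h1, pow_add]
      rw [Finset.sum_congr rfl hterm, ← Finset.mul_sum, ih, ih, B_rec,
        Finset.sum_range_succ]
      have h2 : ((-1 : ℤ)) ^ ((∑ i ∈ Finset.range k, i) + k) * ((-1) ^ (N + k) * B N k)
          = (-1) ^ N * ((-1) ^ (∑ i ∈ Finset.range k, i) * B N k) := by
        rw [pow_add, pow_add]
        have : ((-1 : ℤ)) ^ k * (-1) ^ k = 1 := by
          rw [← mul_pow]; norm_num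
        calc ((-1 : ℤ)) ^ (∑ i ∈ Finset.range k, i) * (-1) ^ k *
              ((-1) ^ N * (-1) ^ k * B N k)
            = ((-1) ^ k * (-1) ^ k) * ((-1) ^ N * ((-1) ^ (∑ i ∈ Finset.range k, i) * B N k)) :=
              by ring
          _ = (-1) ^ N * ((-1) ^ (∑ i ∈ Finset.range k, i) * B N k) := by rw [this]; ring
      rw [mul_add, h2]

lemma SS_fin (N k : ℕ) :
    (∑ A ∈ (Finset.univ : Finset (Fin N)).powersetCard k, (-1 : ℤ) ^ (∑ a ∈ A, (a : ℕ))) =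
      (-1) ^ (∑ i ∈ Finset.range k, i) * B N k := by
  have h1 : (Finset.univ : Finset (Fin N)).map Fin.valEmbedding = Finset.range N := by
    rw [Fin.map_valEmbedding_univ, Nat.Iio_eq_range]
  rw [← SS N k, ← h1, Finset.powersetCard_map, Finset.sum_map]
  apply Finset.sum_congr rfl
  intro A _
  congr 1
  rw [show (Finset.mapEmbedding Fin.valEmbedding).toEmbedding A = A.map Fin.valEmbedding
    from rfl, Finset.sum_map]
  rfl

end ShuffleAux

open ShuffleAux in
theorem statement0 (m n : ℕ) :
    (∑ σ ∈ Finset.univ.filter (fun σ : Equiv.Perm (Fin (m + n)) =>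
        (∀ i j : Fin (m + n), (i : ℕ) < m → (j : ℕ) < m → i < j → σ i < σ j) ∧
        (∀ i j : Fin (m + n), m ≤ (i : ℕ) → m ≤ (j : ℕ) → i < j → σ i < σ j)),
      (Equiv.Perm.sign σ : ℤ)) =
    if m % 2 = 1 ∧ n % 2 = 1 then 0 else (((m + n) / 2).choose (m / 2) : ℤ) := by
  classical
  have hfilt : ∀ σ : Equiv.Perm (Fin (m + n)),
      (σ ∈ Finset.univ.filter (fun σ : Equiv.Perm (Fin (m + n)) =>
        (∀ i j : Fin (m + n), (i : ℕ) < m → (j : ℕ) < m → i < j → σ i < σ j) ∧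
        (∀ i j : Fin (m + n), m ≤ (i : ℕ) → m ≤ (j : ℕ) → i < j → σ i < σ j))) ↔ P m n σ := by
    intro σ
    rw [Finset.mem_filter]
    exact ⟨fun h => h.2, fun h => ⟨Finset.mem_univ _, h⟩⟩
  have h1 : (∑ σ ∈ Finset.univ.filter (fun σ : Equiv.Perm (Fin (m + n)) =>
        (∀ i j : Fin (m + n), (i : ℕ) < m → (j : ℕ) < m → i < j → σ i < σ j) ∧
        (∀ i j : Fin (m + n), m ≤ (i : ℕ) → m ≤ (j : ℕ) → i < j → σ i < σ j)),
      (Equiv.Perm.sign σ : ℤ)) =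
      ∑ A ∈ (Finset.univ : Finset (Fin (m + n))).powersetCard m,
        (-1 : ℤ) ^ ((∑ a ∈ A, (a : ℕ)) + ∑ i ∈ Finset.range m, i) := by
    refine Finset.sum_nbij' (fun σ => img σ)
      (fun A => if h : A.card = m then shuf A h else 1) ?_ ?_ ?_ ?_ ?_
    · intro σ hσ
      rw [Finset.mem_powersetCard_univ]
      exact img_card σ
    · intro A hA
      rw [Finset.mem_powersetCard_univ] at hA
      simp only [dif_pos hA]
      exact (hfilt _).2 (shuf_isShuffle A hA)
    · intro σ hσ
      simp only [dif_pos (img_card σ)]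
      exact (eq_shuf σ ((hfilt σ).1 hσ)).symm
    · intro A hA
      rw [Finset.mem_powersetCard_univ] at hA
      simp only [dif_pos hA]
      exact img_shuf A hA
    · intro σ hσ
      exact sign_shuffle _ σ ((hfilt σ).1 hσ) rfl
  rw [h1]
  have h2 : ∀ A ∈ (Finset.univ : Finset (Fin (m + n))).powersetCard m,
      (-1 : ℤ) ^ ((∑ a ∈ A, (a : ℕ)) + ∑ i ∈ Finset.range m, i)
        = (-1) ^ (∑ a ∈ A, (a : ℕ)) * (-1) ^ (∑ i ∈ Finset.range m, i) := by
    intro A _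
    rw [pow_add]
  rw [Finset.sum_congr rfl h2, ← Finset.sum_mul, SS_fin]
  have h3 : ((-1 : ℤ)) ^ (∑ i ∈ Finset.range m, i) * B (m + n) m *
      (-1) ^ (∑ i ∈ Finset.range m, i) = B (m + n) m := by
    have : ((-1 : ℤ)) ^ (∑ i ∈ Finset.range m, i) * (-1) ^ (∑ i ∈ Finset.range m, i) = 1 := by
      rw [← mul_pow]; norm_num
    calc ((-1 : ℤ)) ^ (∑ i ∈ Finset.range m, i) * B (m + n) m *
        (-1) ^ (∑ i ∈ Finset.range m, i)
        = ((-1 : ℤ)) ^ (∑ i ∈ Finset.range m, i) * (-1) ^ (∑ i ∈ Finset.range m, i) *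
          B (m + n) m := by ring
      _ = B (m + n) m := by rw [this]; ring
  rw [h3]
  unfold B
  by_cases h : m % 2 = 1 ∧ n % 2 = 1
  · rw [if_pos (by omega), if_pos h]
  · rw [if_neg (by omega), if_neg h]
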